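/- Let F = F_{4^d}, d ≥ 2. There do not exist x, y, z ∈ F \ {0} with x³, y³, z³ all distinct and all ≠ 1, and λ, μ, η ∈ F_4 \ {0} such that λ + μx + ηy = z and λ + μx^{−2} + ηy^{−2} = z^{−2}. -/
import Mathlib


/-- coplanarity exclusion for the 4-general set V₁ of PG(2d−1,4). -/
theorem stmt13 (d : ℕ) (hd : 2 ≤ d) (F : Type) [Field F] [Fintype F]
    (hcard : Fintype.card F = 4 ^ d) :
    ¬ ∃ x y z l m e : F, x ≠ 0 ∧ y ≠ 0 ∧ z ≠ 0 ∧
      x ^ 3 ≠ 1 ∧ y ^ 3 ≠ 1 ∧ z ^ 3 ≠ 1 ∧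
      x ^ 3 ≠ y ^ 3 ∧ x ^ 3 ≠ z ^ 3 ∧ y ^ 3 ≠ z ^ 3 ∧
      l ^ 3 = 1 ∧ m ^ 3 = 1 ∧ e ^ 3 = 1 ∧
      l + m * x + e * y = z ∧ l + m * x⁻¹ ^ 2 + e * y⁻¹ ^ 2 = z⁻¹ ^ 2 := by
  rintro ⟨x, y, z, l, m, e, hx, hy, hz, hx3, hy3, hz3, hxy, hxz, hyz, hl, hm, he, h1, h2⟩
  -- characteristic 2
  have htwo : (2 : F) = 0 := by
    have h4 : ((4 : F)) ^ d = 0 := by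
      have hc := FiniteField.cast_card_eq_zero F
      rw [hcard] at hc; push_cast at hc; exact hc
    have h2d : (2 : F) ^ (2 * d) = 0 := by
      rw [pow_mul]; norm_num at h4 ⊢; exact h4
    exact pow_eq_zero_iff (by omega : 2 * d ≠ 0) |>.mp h2d
  -- clear denominators in the second equation
  have h2' : l * (x ^ 2 * y ^ 2 * z ^ 2) + m * (y ^ 2 * z ^ 2) + e * (x ^ 2 * z ^ 2)
      = x ^ 2 * y ^ 2 := by
    field_simp at h2
    linear_combination h2
  -- the cleared equation is a perfect square in characteristic 2
  have hQ2 : (l ^ 2 * (x * y * z) + m ^ 2 * (y * z) + e ^ 2 * (x * z) + x * y) ^ 2 = 0 := by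
    linear_combination h2' + (l * x ^ 2 * y ^ 2 * z ^ 2) * hl + (m * y ^ 2 * z ^ 2) * hm
      + (e * x ^ 2 * z ^ 2) * he
      + (x ^ 2 * y ^ 2 + l ^ 2 * m ^ 2 * x * y ^ 2 * z ^ 2 + l ^ 2 * e ^ 2 * x ^ 2 * y * z ^ 2
        + l ^ 2 * x ^ 2 * y ^ 2 * z + m ^ 2 * e ^ 2 * x * y * z ^ 2 + m ^ 2 * x * y ^ 2 * z
        + e ^ 2 * x ^ 2 * y * z) * htwo
  have hQ : l ^ 2 * (x * y * z) + m ^ 2 * (y * z) + e ^ 2 * (x * z) + x * y = 0 :=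
    pow_eq_zero_iff (by norm_num : (2 : ℕ) ≠ 0) |>.mp hQ2
  -- the key factorization
  have hP : (e ^ 2 * x + m ^ 2 * y) * (l ^ 2 * m * x + 1) * (e * y + l) = 0 := by
    linear_combination hQ + (-(x * y) + x * y * m ^ 3 + x ^ 2 * m * e ^ 2) * hl
      + (x * y ^ 2 * l ^ 2 * e) * hm + (x ^ 2 * y * l ^ 2 * m) * he + (-(x * y)) * htwo
      + (l ^ 2 * x * y + m ^ 2 * y + e ^ 2 * x) * h1
  rcases mul_eq_zero.mp hP with hP1 | hC
  · rcases mul_eq_zero.mp hP1 with hA | hB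
    · exact hxy (by linear_combination (e ^ 4 * x ^ 2 - e ^ 2 * m ^ 2 * x * y + m ^ 4 * y ^ 2) * hA
        - ((e ^ 3 + 1) * x ^ 3) * he - ((m ^ 3 + 1) * y ^ 3) * hm - y ^ 3 * htwo)
    · exact hx3 (by linear_combination (l ^ 4 * m ^ 2 * x ^ 2 - l ^ 2 * m * x + 1) * hB
        - ((l ^ 3 + 1) * m ^ 3 * x ^ 3) * hl - x ^ 3 * hm - htwo)
  · exact hy3 (by linear_combination (e ^ 2 * y ^ 2 - e * y * l + l ^ 2) * hC
      - y ^ 3 * he - hl - htwo)
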